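/- For label noise on the zero-loss set, the covariance matrix of the noise equals (2/N) times the Hessian of the loss: with notation as above, define Σ(w)_{kl} := Σ_{i=1}^N ∂_{w_k} f(w)_i ∂_{w_l} f(w)_i where f(w)_i = −(2/N)(f_w(x_i) − y_i). Then for any w with L(w) = 0 (and f_w being C²), Σ(w) = (2/N) ∇²L(w). -/

import Mathlib

/-- **Label-noise covariance equals `(2/N)` times the Hessian on the zero-loss set.**
With `f(w)_i = -(2/N)(f_w(x_i) - y_i)` and
`Σ(w)_{kl} = ∑ i ∂_{w_k} f(w)_i ∂_{w_l} f(w)_i`, for any `w` with `L(w) = 0` one has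
`Σ(w) = (2/N) ∇²L(w)`. -/
theorem label_noise_covariance_eq_hessian
    {m din N : ℕ} (hN : 0 < N)
    (F : (Fin m → ℝ) → (Fin din → ℝ) → ℝ)
    (hF : ∀ x, ContDiff ℝ 2 (fun w => F w x))
    (x : Fin N → (Fin din → ℝ)) (y : Fin N → ℝ)
    (L : (Fin m → ℝ) → ℝ)
    (hL : ∀ w, L w = (1 / (N : ℝ)) * ∑ i, (F w (x i) - y i) ^ 2)
    (w : Fin m → ℝ) (hzero : L w = 0) :
    ∀ k l : Fin m,
      (∑ i, (fderiv ℝ (fun w' => -(2 / (N : ℝ)) * (F w' (x i) - y i)) w (Pi.single k 1)) *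
          (fderiv ℝ (fun w' => -(2 / (N : ℝ)) * (F w' (x i) - y i)) w (Pi.single l 1))) =
        (2 / (N : ℝ)) * (iteratedFDeriv ℝ 2 L w) ![Pi.single k 1, Pi.single l 1] := by
  intro k l
  set u : Fin m → ℝ := Pi.single k 1 with hu
  set v : Fin m → ℝ := Pi.single l 1 with hv
  set g : Fin N → (Fin m → ℝ) → ℝ := fun i w' => F w' (x i) - y i with hgdef
  have hNne : (N : ℝ) ≠ 0 := Nat.cast_ne_zero.mpr hN.ne'
  have hg : ∀ i, ContDiff ℝ 2 (g i) := fun i => (hF (x i)).sub contDiff_const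
  have hgd : ∀ i w', DifferentiableAt ℝ (g i) w' := fun i w' =>
    ((hg i).differentiable (by norm_num)).differentiableAt
  -- each residual vanishes at w
  have hgz : ∀ i, g i w = 0 := by
    have h1 : ∑ i, (g i w) ^ 2 = 0 := by
      have := hzero
      rw [hL w] at this
      field_simp at this
      simpa [hgdef] using this
    intro i
    have := (Finset.sum_eq_zero_iff_of_nonneg (fun i _ => sq_nonneg (g i w))).mp h1 i
      (Finset.mem_univ i)
    exact pow_eq_zero_iff (n := 2) (by norm_num) |>.mp this
  -- L equals the explicit formula
  have hLfun : L = fun w' => (1 / (N : ℝ)) * ∑ i, (g i w') ^ 2 := funext hL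
  have hLC2 : ContDiff ℝ 2 L := by
    rw [hLfun]
    exact contDiff_const.mul (ContDiff.sum fun i _ => (hg i).pow 2)
  -- first derivative of L, everywhere
  have hsq : ∀ i w', HasFDerivAt (fun w'' => (g i w'') ^ 2)
      ((2 * g i w') • fderiv ℝ (g i) w') w' := by
    intro i w'
    have h := ((hgd i w').hasFDerivAt.fun_mul (hgd i w').hasFDerivAt)
    have : (g i w') • fderiv ℝ (g i) w' + (g i w') • fderiv ℝ (g i) w'
        = (2 * g i w') • fderiv ℝ (g i) w' := by
      rw [← add_smul]; ring_nf
    rw [this] at h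
    have e : (fun w'' => g i w'' ^ 2) = fun w'' => g i w'' * g i w'' := by
      funext w''; ring
    rw [e]; exact h
  have hLd : ∀ w' z, fderiv ℝ L w' z
      = (1 / (N : ℝ)) * ∑ i, 2 * (g i w' * fderiv ℝ (g i) w' z) := by
    intro w' z
    rw [hLfun]
    rw [fderiv_const_mul (DifferentiableAt.fun_sum fun i _ => ((hsq i w').differentiableAt))]
    rw [fderiv_fun_sum (fun i _ => (hsq i w').differentiableAt)]
    simp only [ContinuousLinearMap.smul_apply, ContinuousLinearMap.coe_sum',
      Finset.sum_apply, smul_eq_mul]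
    congr 1
    refine Finset.sum_congr rfl fun i _ => ?_
    rw [(hsq i w').fderiv]
    simp [smul_eq_mul]; ring
  -- second derivative via fderiv of fderiv
  have hdiffF : DifferentiableAt ℝ (fderiv ℝ L) w :=
    ((hLC2.fderiv_right (m := 1) (le_refl 2)).differentiable (by norm_num)).differentiableAt
  have step1 : (iteratedFDeriv ℝ 2 L w) ![u, v] = fderiv ℝ (fun w' => fderiv ℝ L w' v) w u := by
    rw [iteratedFDeriv_two_apply]
    have : (fun w' => fderiv ℝ L w' v) = fun w' => (fderiv ℝ L w') ((fun _ => v) w') := rfl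
    rw [this, fderiv_clm_apply hdiffF (differentiableAt_const v)]
    simp [Matrix.cons_val_zero, Matrix.cons_val_one, Matrix.head_cons]
  -- differentiability of w' ↦ fderiv (g i) w' v
  have hDgv : ∀ i, DifferentiableAt ℝ (fun w' => fderiv ℝ (g i) w' v) w := by
    intro i
    have h1 : ContDiff ℝ 1 (fderiv ℝ (g i)) := (hg i).fderiv_right (le_refl 2)
    have : DifferentiableAt ℝ (fderiv ℝ (g i)) w := (h1.differentiable (by norm_num)).differentiableAt
    exact (this.clm_apply (differentiableAt_const v))
  -- compute fderiv of first derivative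
  have hinner : ∀ i, DifferentiableAt ℝ (fun w' => 2 * (g i w' * fderiv ℝ (g i) w' v)) w :=
    fun i => (differentiableAt_const 2).mul ((hgd i w).mul (hDgv i))
  have step2 : fderiv ℝ (fun w' => fderiv ℝ L w' v) w u
      = (1 / (N : ℝ)) * ∑ i, 2 * (fderiv ℝ (g i) w v * fderiv ℝ (g i) w u) := by
    have he : (fun w' => fderiv ℝ L w' v)
        = fun w' => (1 / (N : ℝ)) * ∑ i, 2 * (g i w' * fderiv ℝ (g i) w' v) := by
      funext w'; exact hLd w' v
    rw [he, fderiv_const_mul (DifferentiableAt.fun_sum fun i _ => hinner i)]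
    rw [ContinuousLinearMap.smul_apply, smul_eq_mul]
    congr 1
    rw [fderiv_fun_sum (fun i _ => hinner i)]
    rw [ContinuousLinearMap.coe_sum', Finset.sum_apply]
    refine Finset.sum_congr rfl fun i _ => ?_
    rw [fderiv_const_mul ((hgd i w).fun_mul (hDgv i)) 2, ContinuousLinearMap.smul_apply,
      smul_eq_mul]
    congr 1
    rw [fderiv_fun_mul (hgd i w) (hDgv i)]
    simp [hgz i, smul_eq_mul]
  -- left-hand side factors
  have hlhs : ∀ (i : Fin N) (z : Fin m → ℝ),
      fderiv ℝ (fun w' => -(2 / (N : ℝ)) * (F w' (x i) - y i)) w z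
        = -(2 / (N : ℝ)) * fderiv ℝ (g i) w z := by
    intro i z
    rw [fderiv_const_mul (hgd i w) (-(2 / (N : ℝ)))]
    simp [smul_eq_mul]
  simp only [hlhs]
  rw [step1, step2]
  rw [Finset.mul_sum, Finset.mul_sum]
  refine Finset.sum_congr rfl fun i _ => ?_
  have : (N : ℝ) ≠ 0 := hNne
  field_simp
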